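/- For k ≥ 4, there is no k-regular connected non-complete graph G with a proper k-colouring α such that every Kempe change from α preserves the partition of the vertex set into colour classes. -/

import Mathlib

open SimpleGraph
open scoped Classical

variable {V : Type*}

/-- A proper `k`-colouring of `G`. -/
def IsProperColoring (G : SimpleGraph V) (k : ℕ) (c : V → Fin k) : Prop :=
  ∀ ⦃u v : V⦄, G.Adj u v → c u ≠ c v

/-- `c'` is obtained from `c` by a single Kempe change: the colours `a` and `b` are
swapped on the connected component (of the subgraph induced by the vertices coloured
`a` or `b`) containing `v0`, and all other vertices keep their colour. -/

def KempeStep (G : SimpleGraph V) (k : ℕ) (c c' : V → Fin k) : Prop :=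
  ∃ a b : Fin k, ∃ v0 : {x : V | c x = a ∨ c x = b},
    ∀ v : V, c' v =
      if h : c v = a ∨ c v = b then
        if (G.induce {x : V | c x = a ∨ c x = b}).Reachable v0 ⟨v, h⟩
          then Equiv.swap a b (c v) else c v
      else c v

/-- Two colourings are Kempe equivalent if one is obtained from the other by a finite
sequence of Kempe changes. -/
def KempeEquiv (G : SimpleGraph V) (k : ℕ) (c c' : V → Fin k) : Prop :=
  Relation.ReflTransGen (KempeStep G k) c c'

/-- The set of all proper `k`-colourings of `G` forms a single Kempe class. -/
def KempeClass (G : SimpleGraph V) (k : ℕ) : Prop :=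
  ∀ c c' : V → Fin k, IsProperColoring G k c → IsProperColoring G k c' →
    KempeEquiv G k c c'

/-- `G` is `d`-degenerate: every nonempty set of vertices contains a vertex with at
most `d` neighbours inside the set. -/
def Degenerate (G : SimpleGraph V) (d : ℕ) : Prop :=
  ∀ S : Set V, S.Nonempty → ∃ v ∈ S, (S ∩ G.neighborSet v).ncard ≤ d

/-- `G` is 3-connected: more than 3 vertices, and deleting any at most 2 vertices
leaves it connected. -/
def ThreeConnected [Fintype V] (G : SimpleGraph V) : Prop :=
  3 < Fintype.card V ∧ ∀ S : Set V, S.ncard ≤ 2 → (G.induce Sᶜ).Connected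

open Finset

lemma aux_exists_adj_dist_lt {W : Type*} (H : SimpleGraph W) {r v : W}
    (hr : H.Reachable v r) (hne : v ≠ r) :
    ∃ u, H.Adj v u ∧ H.dist r u < H.dist r v := by
  obtain ⟨p, hp⟩ := hr.exists_walk_length_eq_dist
  cases p with
  | nil => exact absurd rfl hne
  | @cons _ u _ hadj q =>
    refine ⟨u, hadj, ?_⟩
    have h1 : H.dist u r ≤ q.length := H.dist_le q
    have h2 : H.dist v r = q.length + 1 := by
      simpa using hp.symm
    rw [SimpleGraph.dist_comm] ; rw [SimpleGraph.dist_comm (u := r)]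
    omega

lemma aux_conn_card_le {W : Type*} [Fintype W] (H : SimpleGraph W) [DecidableRel H.Adj]
    (hpre : ∀ x y : W, H.Reachable x y) (r : W) :
    2 * Fintype.card W ≤ (∑ w, H.degree w) + 2 := by
  have hhs : ∑ w, H.degree w = 2 * H.edgeFinset.card :=
    SimpleGraph.sum_degrees_eq_twice_card_edges H
  suffices h : Fintype.card W ≤ H.edgeFinset.card + 1 by omega
  have key : ∀ v, v ≠ r → ∃ u, H.Adj v u ∧ H.dist r u < H.dist r v :=
    fun v h => aux_exists_adj_dist_lt H (hpre v r) h
  choose! u hu1 hu2 using key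
  have hmaps : ∀ v ∈ Finset.univ.erase r, s(v, u v) ∈ H.edgeFinset := by
    intro v hv
    exact SimpleGraph.mem_edgeFinset.mpr (hu1 v (Finset.ne_of_mem_erase hv))
  have hinj : Set.InjOn (fun v => s(v, u v)) (Finset.univ.erase r) := by
    intro x hx y hy hxy
    simp only [Sym2.eq_iff] at hxy
    rcases hxy with ⟨h1, h2⟩ | ⟨h1, h2⟩
    · exact h1
    · exfalso
      have hx' := hu2 x (Finset.ne_of_mem_erase hx)
      have hy' := hu2 y (Finset.ne_of_mem_erase hy)
      rw [h2] at hx'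
      rw [← h1] at hy'
      omega
  have := Finset.card_le_card_of_injOn _ hmaps hinj
  rw [Finset.card_erase_of_mem (Finset.mem_univ r), Finset.card_univ] at this
  omega

/-- for `k ≥ 4` there is no `k`-regular connected non-complete graph
with a proper `k`-colouring all of whose Kempe changes preserve the colour partition:
from any proper `k`-colouring `α` of such a graph, some Kempe change produces a
colouring that is not a colour-permutation of `α`. -/
theorem stmt16 {V : Type*} [Fintype V] (k : ℕ) (hk : 4 ≤ k) (G : SimpleGraph V)
    [DecidableRel G.Adj] (hreg : G.IsRegularOfDegree k) (hconn : G.Connected)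
    (hnc : G ≠ ⊤) (α : V → Fin k) (hα : IsProperColoring G k α) :
    ∃ c' : V → Fin k, KempeStep G k α c' ∧
      ∀ π : Equiv.Perm (Fin k), c' ≠ ⇑π ∘ α := by
  by_contra hcon
  push_neg at hcon
  -- Step R : any two vertices in classes {a,b} are connected in the induced graph
  have hR : ∀ a b : Fin k, a ≠ b → ∀ x y : {z : V | α z = a ∨ α z = b},
      (G.induce {z : V | α z = a ∨ α z = b}).Reachable x y := by
    intro a b hab x y
    by_contra hreach
    set c' : V → Fin k := fun v =>
      if h : α v = a ∨ α v = b then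
        if (G.induce {z : V | α z = a ∨ α z = b}).Reachable x ⟨v, h⟩
          then Equiv.swap a b (α v) else α v
      else α v with hc'
    have hstep : KempeStep G k α c' := by
      refine ⟨a, b, x, fun v => ?_⟩
      rw [hc']
      beta_reduce
      split_ifs <;> rfl
    obtain ⟨π, hπ⟩ := hcon c' hstep
    have happ : ∀ v, c' v = π (α v) := fun v => by rw [hπ]; rfl
    have hx1 : α x.val = a ∨ α x.val = b := x.prop
    have hy1 : α y.val = a ∨ α y.val = b := y.prop
    have hx' : c' x.val = Equiv.swap a b (α x.val) := by
      rw [hc']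
      simp only
      rw [dif_pos hx1, if_pos]
      exact Reachable.refl _
    have hy' : c' y.val = α y.val := by
      rw [hc']
      simp only
      rw [dif_pos hy1, if_neg]
      exact hreach
    have hxswap : Equiv.swap a b (α x.val) ≠ α x.val := by
      rcases hx1 with h | h <;> rw [h] <;>
        simp [Equiv.swap_apply_left, Equiv.swap_apply_right, hab, hab.symm]
    by_cases hxy : α x.val = α y.val
    · have h1 : c' x.val = c' y.val := by rw [happ, happ, hxy]
      rw [hx', hy', ← hxy] at h1
      exact hxswap h1
    · have hswapxy : Equiv.swap a b (α x.val) = α y.val := by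
        rcases hx1 with h1 | h1 <;> rcases hy1 with h2 | h2 <;>
          rw [h1, h2] <;>
          simp_all [Equiv.swap_apply_left, Equiv.swap_apply_right]
      have h1 : c' x.val = c' y.val := by rw [hx', hy', hswapxy]
      rw [happ, happ] at h1
      exact hxy (π.injective h1)
  -- notation
  set n : ℕ := Fintype.card V with hn
  set Ca : Fin k → Finset V := fun a => univ.filter (fun v => α v = a) with hCa
  set d : V → Fin k → ℕ :=
    fun v c => (univ.filter (fun u => G.Adj v u ∧ α u = c)).card with hd
  have f1 : ∀ v, ∑ c, d v c = k := by
    intro v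
    have h0 : (univ.filter (fun u => G.Adj v u)).card = k := by
      rw [← neighborFinset_eq_filter]; exact hreg v
    rw [Finset.card_eq_sum_card_fiberwise (f := α) (t := univ)
      (fun x _ => mem_univ _)] at h0
    have h1 : ∑ c, d v c
        = ∑ c, #(filter (fun u => α u = c) (filter (fun u => G.Adj v u) univ)) := by
      apply Finset.sum_congr rfl
      intro c _
      rw [hd]
      simp only [Finset.filter_filter]
    exact h1.trans h0
  have f2 : ∀ v c, α v = c → d v c = 0 := by
    intro v c hvc
    rw [hd]
    simp only [Finset.card_eq_zero, Finset.filter_eq_empty_iff]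
    rintro u - ⟨hadj, huc⟩
    exact hα hadj (hvc.trans huc.symm)
  have f3 : ∀ a, ∑ v, d v a = k * (Ca a).card := by
    intro a
    rw [hd]
    simp only
    have h1 : ∀ v : V, (univ.filter (fun u => G.Adj v u ∧ α u = a)).card
        = ∑ u, if G.Adj v u ∧ α u = a then 1 else 0 := fun v =>
      Finset.card_filter _ _
    simp only [h1]
    rw [Finset.sum_comm]
    have h2 : ∀ u : V, (∑ v, if G.Adj v u ∧ α u = a then 1 else 0)
        = if α u = a then k else 0 := by
      intro u
      by_cases hu : α u = a
      · simp only [hu, and_true, if_true]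
        have e1 : (∑ v, if G.Adj v u then 1 else 0)
            = (univ.filter (fun v => G.Adj v u)).card := (Finset.card_filter _ _).symm
        rw [e1]
        have e2 : (univ.filter (fun v => G.Adj v u)) = (univ.filter (fun v => G.Adj u v)) := by
          apply Finset.filter_congr; intro v _; simp [G.adj_comm]
        rw [e2, ← neighborFinset_eq_filter]
        exact hreg u
      · simp [hu]
    simp only [h2]
    have e3 : (∑ u : V, if α u = a then k else 0) = ∑ u ∈ Ca a, k := by
      rw [hCa]; exact (Finset.sum_filter _ _).symm
    rw [e3, Finset.sum_const, smul_eq_mul, mul_comm]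
  have f6 : ∑ a, (Ca a).card = n := by
    rw [hn, ← Finset.card_univ,
      Finset.card_eq_sum_card_fiberwise (f := α) (t := univ) (fun x _ => mem_univ _)]
  -- per-pair inequality
  have f4 : ∀ a b : Fin k, a ≠ b →
      2 * ((Ca a).card + (Ca b).card)
        ≤ (∑ v ∈ Ca a, d v b) + (∑ v ∈ Ca b, d v a) + 2 := by
    intro a b hab
    set S : Set V := {z : V | α z = a ∨ α z = b} with hS
    haveI instS : Fintype ↥S := Set.Finite.fintype (Set.toFinite S)
    have hSfin : S.toFinset = Ca a ∪ Ca b := by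
      ext z
      simp [hS, hCa, Set.mem_toFinset, Finset.mem_union, Finset.mem_filter]
    have hdisj : Disjoint (Ca a) (Ca b) := by
      rw [Finset.disjoint_left]
      intro z hz1 hz2
      rw [hCa] at hz1 hz2
      simp only [Finset.mem_filter] at hz1 hz2
      exact hab (hz1.2.symm.trans hz2.2)
    have hcardS : Fintype.card ↥S = (Ca a).card + (Ca b).card := by
      rw [← Set.toFinset_card, hSfin, Finset.card_union_of_disjoint hdisj]
    rcases isEmpty_or_nonempty ↥S with he | hne
    · have h0 : Fintype.card ↥S = 0 := Fintype.card_eq_zero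
      omega
    · obtain ⟨r⟩ := hne
      have hpre : ∀ x y : ↥S, (G.induce S).Reachable x y := hR a b hab
      have h1 := aux_conn_card_le (G.induce S) hpre r
      set D : V → ℕ := fun v => if α v = a then d v b else d v a with hD
      have h3 : ∀ w : ↥S, (G.induce S).degree w ≤ D w.val := by
        intro w
        have hw2 : α w.val = a ∨ α w.val = b := w.prop
        rw [SimpleGraph.degree]
        by_cases hw : α w.val = a
        · have : D w.val = d w.val b := by rw [hD]; simp [hw]
          rw [this, hd]
          apply Finset.card_le_card_of_injOn Subtype.val
          · intro u hu
            rw [Finset.mem_coe, SimpleGraph.mem_neighborFinset] at hu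
            have hadj : G.Adj w.val u.val := hu
            have hub : α u.val = b := by
              rcases u.prop with h | h
              · exact absurd (hw.trans h.symm) (hα hadj)
              · exact h
            exact Finset.mem_filter.mpr ⟨Finset.mem_univ _, hadj, hub⟩
          · exact Subtype.val_injective.injOn
        · have hwb : α w.val = b := hw2.resolve_left hw
          have : D w.val = d w.val a := by rw [hD]; simp [hw]
          rw [this, hd]
          apply Finset.card_le_card_of_injOn Subtype.val
          · intro u hu
            rw [Finset.mem_coe, SimpleGraph.mem_neighborFinset] at hu
            have hadj : G.Adj w.val u.val := hu
            have hua : α u.val = a := by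
              rcases u.prop with h | h
              · exact h
              · exact absurd (hwb.trans h.symm) (hα hadj)
            exact Finset.mem_filter.mpr ⟨Finset.mem_univ _, hadj, hua⟩
          · exact Subtype.val_injective.injOn
      have h4 : ∑ v ∈ S.toFinset, D v
          = (∑ v ∈ Ca a, d v b) + (∑ v ∈ Ca b, d v a) := by
        rw [hSfin, Finset.sum_union hdisj]
        congr 1
        · apply Finset.sum_congr rfl
          intro v hv
          rw [hCa] at hv
          have hva : α v = a := (Finset.mem_filter.mp hv).2
          rw [hD]; simp [hva]
        · apply Finset.sum_congr rfl
          intro v hv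
          rw [hCa] at hv
          have hvb : α v = b := (Finset.mem_filter.mp hv).2
          have hvna : ¬ (α v = a) := by rw [hvb]; exact fun h => hab h.symm
          rw [hD]; simp [hvna]
      have h5 : ∑ v ∈ S.toFinset, D v = ∑ w : ↥S, D w.val :=
        Finset.sum_subtype S.toFinset (fun x => Set.mem_toFinset) D
      have h6 : ∑ w : ↥S, (G.induce S).degree w ≤ ∑ w : ↥S, D w.val :=
        Finset.sum_le_sum (fun w _ => h3 w)
      omega
  -- per-class inequality
  have f5 : ∀ a : Fin k, n + 1 ≤ 2 * (Ca a).card + k := by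
    intro a
    have hsum : ∑ b ∈ univ.erase a, (2 * ((Ca a).card + (Ca b).card))
        ≤ ∑ b ∈ univ.erase a, ((∑ v ∈ Ca a, d v b) + (∑ v ∈ Ca b, d v a) + 2) :=
      Finset.sum_le_sum (fun b hb => f4 a b (Finset.ne_of_mem_erase hb).symm)
    have hcerase : (univ.erase a).card = k - 1 := by
      rw [Finset.card_erase_of_mem (Finset.mem_univ a), Finset.card_univ, Fintype.card_fin]
    have hL : ∑ b ∈ univ.erase a, (2 * ((Ca a).card + (Ca b).card))
        = 2 * ((k-1) * (Ca a).card) + 2 * (∑ b ∈ univ.erase a, (Ca b).card) := by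
      rw [← Finset.mul_sum, Finset.sum_add_distrib, Finset.sum_const, hcerase,
        smul_eq_mul, mul_add]
    have hsum_nb : (∑ b ∈ univ.erase a, (Ca b).card) + (Ca a).card = n := by
      rw [Finset.sum_erase_add _ _ (Finset.mem_univ a)]
      exact f6
    have hR1 : ∑ b ∈ univ.erase a, (∑ v ∈ Ca a, d v b) = k * (Ca a).card := by
      rw [Finset.sum_comm]
      have hval : ∀ v ∈ Ca a, ∑ b ∈ univ.erase a, d v b = k := by
        intro v hv
        rw [hCa] at hv
        have hva : α v = a := (Finset.mem_filter.mp hv).2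
        have h1 := f1 v
        rw [← Finset.sum_erase_add _ _ (Finset.mem_univ a), f2 v a hva] at h1
        omega
      rw [Finset.sum_congr rfl hval, Finset.sum_const, smul_eq_mul, mul_comm]
    have hR2 : ∑ b ∈ univ.erase a, (∑ v ∈ Ca b, d v a) = k * (Ca a).card := by
      have htot : ∑ b ∈ univ, (∑ v ∈ Ca b, d v a) = ∑ v, d v a := by
        rw [hCa]
        exact Finset.sum_fiberwise_of_maps_to (fun x _ => Finset.mem_univ _) _
      have hself : ∑ v ∈ Ca a, d v a = 0 := by
        apply Finset.sum_eq_zero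
        intro v hv
        rw [hCa] at hv
        exact f2 v a (Finset.mem_filter.mp hv).2
      have heq := Finset.sum_erase_add univ (fun b => ∑ v ∈ Ca b, d v a) (Finset.mem_univ a)
      simp only [hself, add_zero] at heq
      rw [heq, htot, f3]
    have hR3 : ∑ b ∈ univ.erase a, ((∑ v ∈ Ca a, d v b) + (∑ v ∈ Ca b, d v a) + 2)
        = k * (Ca a).card + k * (Ca a).card + 2*(k-1) := by
      rw [Finset.sum_add_distrib, Finset.sum_add_distrib, hR1, hR2, Finset.sum_const,
        hcerase, smul_eq_mul]
      ring
    have hmul : k * (Ca a).card = (k-1) * (Ca a).card + (Ca a).card := by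
      have hkk : k - 1 + 1 = k := by omega
      calc k * (Ca a).card = ((k-1)+1) * (Ca a).card := by rw [hkk]
        _ = (k-1) * (Ca a).card + (Ca a).card := by ring
    have hk1 : (k - 1) + 1 = k := by omega
    rw [hL, hR3] at hsum
    linarith [hsum, hsum_nb, hmul, hk1]
  -- |V| ≥ k+1
  have f7 : k + 1 ≤ n := by
    obtain ⟨v⟩ := hconn.nonempty
    have h1 := G.degree_lt_card_verts v
    rw [hreg v] at h1
    omega
  -- if |V| = k+1 then G is complete
  have f8 : n = k + 1 → False := by
    intro hnk
    apply hnc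
    ext v w
    simp only [top_adj]
    constructor
    · exact fun h => h.ne
    · intro hvw
      have hsub : G.neighborFinset v ⊆ univ.erase v := by
        intro u hu
        rw [SimpleGraph.mem_neighborFinset] at hu
        exact Finset.mem_erase.mpr ⟨hu.ne', Finset.mem_univ u⟩
      have hdeg : (G.neighborFinset v).card = k := hreg v
      have hcard : (univ.erase v).card ≤ (G.neighborFinset v).card := by
        rw [Finset.card_erase_of_mem (Finset.mem_univ v), Finset.card_univ, hdeg]
        omega
      have heq := Finset.eq_of_subset_of_card_le hsub hcard
      have hw : w ∈ G.neighborFinset v := by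
        rw [heq]
        exact Finset.mem_erase.mpr ⟨Ne.symm hvw, Finset.mem_univ w⟩
      exact (SimpleGraph.mem_neighborFinset _ _ _).mp hw
  -- final arithmetic
  by_cases hcase : n = k + 1
  · exact f8 hcase
  · have hn2 : k + 2 ≤ n := by omega
    have hsumf5 : ∑ _a : Fin k, (n+1) ≤ ∑ a : Fin k, (2 * (Ca a).card + k) :=
      Finset.sum_le_sum (fun a _ => f5 a)
    have hLHS : ∑ _a : Fin k, (n+1) = k * (n+1) := by
      rw [Finset.sum_const, Finset.card_univ, Fintype.card_fin, smul_eq_mul]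
    have hRHS : ∑ a : Fin k, (2 * (Ca a).card + k) = 2 * n + k * k := by
      rw [Finset.sum_add_distrib, ← Finset.mul_sum, f6, Finset.sum_const,
        Finset.card_univ, Fintype.card_fin, smul_eq_mul]
    rw [hLHS, hRHS] at hsumf5
    have hk4 : k ≤ 4 := by
      have h1 : (k:ℤ) * (n+1) ≤ 2*n + k*k := by exact_mod_cast hsumf5
      have h2 : (k:ℤ) + 2 ≤ n := by exact_mod_cast hn2
      have h3 : (4:ℤ) ≤ k := by exact_mod_cast hk
      have : (k:ℤ) ≤ 4 := by nlinarith
      exact_mod_cast this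
    have hk4' : k = 4 := le_antisymm hk4 hk
    subst hk4'
    have hn6 : n = 6 := by omega
    have h2a : ∀ a : Fin 4, 2 ≤ (Ca a).card := by
      intro a
      have := f5 a
      omega
    have h8 : (8:ℕ) ≤ ∑ a : Fin 4, (Ca a).card := by
      calc (8:ℕ) = ∑ _a : Fin 4, 2 := by simp
        _ ≤ ∑ a : Fin 4, (Ca a).card := Finset.sum_le_sum (fun a _ => h2a a)
    rw [f6] at h8
    omega
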